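/- Let p be a prime with p ≡ 1 (mod 4) and p ≠ 5. Then for any integer L with (p-1)/2 ≤ L ≤ p-1, the set I = {1, 2, ..., L} (viewed as residues mod p) admits a nontrivial multiplicative decomposition: there exist A, B ⊆ 𝔽_p with |A| ≥ 2, |B| ≥ 2, and I = A·B. -/
import Mathlib


open Finset Pointwise

/-- For p ≡ 1 (mod 4), p ≠ 5, any interval {1,…,L} with
(p-1)/2 ≤ L ≤ p-1 admits a nontrivial multiplicative decomposition. -/
theorem long_interval_decomposition_one_mod_four
    (p : ℕ) [Fact p.Prime] (hp4 : p % 4 = 1) (hp5 : p ≠ 5)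
    (L : ℕ) (hL1 : p - 1 ≤ 2 * L) (hL2 : L ≤ p - 1) :
    ∃ A B : Finset (ZMod p), 2 ≤ A.card ∧ 2 ≤ B.card ∧
      (Finset.Icc 1 L).image (fun i : ℕ => (i : ZMod p)) = A * B := by
  have hp : p.Prime := Fact.out
  have hp13 : 13 ≤ p := by
    by_contra h
    push_neg at h
    interval_cases p <;> first | omega | (revert hp; decide)
  -- a square root of -1
  obtain ⟨i, hi⟩ : IsSquare (-1 : ZMod p) := by
    rw [ZMod.exists_sq_eq_neg_one_iff]
    omega
  set I : Finset (ZMod p) := (Finset.Icc 1 L).image (fun n : ℕ => (n : ZMod p)) with hIdef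
  have hmem : ∀ x : ZMod p, x ∈ I ↔ 1 ≤ x.val ∧ x.val ≤ L := by
    intro x
    constructor
    · rintro hx
      rw [hIdef, Finset.mem_image] at hx
      obtain ⟨n, hn, rfl⟩ := hx
      rw [Finset.mem_Icc] at hn
      rw [ZMod.val_natCast_of_lt (by omega)]
      exact hn
    · rintro ⟨h1, h2⟩
      rw [hIdef, Finset.mem_image]
      refine ⟨x.val, Finset.mem_Icc.2 ⟨h1, h2⟩, ?_⟩
      exact ZMod.natCast_rightInverse x
  have hvlt : ∀ x : ZMod p, x.val < p := fun x => ZMod.val_lt x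
  have hne0 : ∀ x : ZMod p, x ∈ I → x ≠ 0 := by
    intro x hx h0
    rw [hmem] at hx
    rw [h0] at hx
    simp at hx
  have hcov : ∀ x : ZMod p, x ≠ 0 → x ∈ I ∨ -x ∈ I := by
    intro x hx
    have hv1 : 1 ≤ x.val := ZMod.val_pos.mpr hx
    by_cases hL : x.val ≤ L
    · exact Or.inl ((hmem x).2 ⟨hv1, hL⟩)
    · right
      rw [hmem]
      have hneg : (-x).val = p - x.val := by
        rw [ZMod.neg_val]
        simp [hx]
      rw [hneg]
      have := hvlt x
      omega
  have hi0 : i ≠ 0 := by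
    intro h
    rw [h, mul_zero] at hi
    have : (1 : ZMod p) = 0 := by linear_combination -hi
    exact one_ne_zero this
  have hine1 : (1 : ZMod p) ≠ i := by
    intro h
    rw [← h, mul_one] at hi
    have h2 : ((2 : ℕ) : ZMod p) = 0 := by push_cast; linear_combination -hi
    rw [ZMod.natCast_eq_zero_iff] at h2
    have := Nat.le_of_dvd (by norm_num) h2
    omega
  set A : Finset (ZMod p) := {1, i} with hAdef
  set B : Finset (ZMod p) := I.filter (fun x => i * x ∈ I) with hBdef
  have hIAB : I = A * B := by
    apply Finset.Subset.antisymm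
    · intro x hx
      by_cases hix : i * x ∈ I
      · have hxB : x ∈ B := by
          rw [hBdef, Finset.mem_filter]; exact ⟨hx, hix⟩
        have : (1 : ZMod p) * x ∈ A * B :=
          Finset.mul_mem_mul (by simp [hAdef]) hxB
        simpa using this
      · have hix0 : i * x ≠ 0 := mul_ne_zero hi0 (hne0 x hx)
        have hb : -(i * x) ∈ I := (hcov _ hix0).resolve_left hix
        have hbB : -(i * x) ∈ B := by
          rw [hBdef, Finset.mem_filter]
          refine ⟨hb, ?_⟩
          have : i * -(i * x) = x := by ring_nf; linear_combination x * hi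
          rw [this]; exact hx
        have : i * -(i * x) ∈ A * B :=
          Finset.mul_mem_mul (by simp [hAdef]) hbB
        have hxe : i * -(i * x) = x := by linear_combination x * hi
        rwa [hxe] at this
    · intro x hx
      rw [Finset.mem_mul] at hx
      obtain ⟨a, ha, b, hb, rfl⟩ := hx
      rw [hBdef, Finset.mem_filter] at hb
      rw [hAdef, Finset.mem_insert, Finset.mem_singleton] at ha
      rcases ha with rfl | rfl
      · simpa using hb.1
      · exact hb.2
  have hAcard : A.card = 2 := Finset.card_pair hine1
  have hIcard : I.card = L := by
    rw [hIdef, Finset.card_image_of_injOn, Nat.card_Icc]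
    · omega
    · intro a ha b hb hab
      simp only [Finset.coe_Icc, Set.mem_Icc] at ha hb
      have ha' : ((a : ZMod p)).val = a := ZMod.val_natCast_of_lt (by omega)
      have hb' : ((b : ZMod p)).val = b := ZMod.val_natCast_of_lt (by omega)
      rw [← ha', ← hb']
      exact congrArg ZMod.val hab
  have hBcard : 2 ≤ B.card := by
    have h1 : (A * B).card ≤ A.card * B.card := Finset.card_mul_le
    rw [← hIAB, hIcard, hAcard] at h1
    omega
  exact ⟨A, B, by omega, hBcard, hIAB⟩
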